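/- Let Γ be a connected finite simple graph with vertex set V, and let 𝒩 be a collection of subsets of V such that: (N1) every J ∈ 𝒩 induces a connected (in particular nonempty) subgraph of Γ; (N2) any two members I, J ∈ 𝒩 satisfy I ⊆ J, or J ⊆ I, or I ∩ J = ∅; (N3) for any k ≥ 2 pairwise disjoint members J₁,…,J_k ∈ 𝒩, the induced subgraph on J₁ ∪ ⋯ ∪ J_k is not connected. If V ∉ 𝒩, then there exists a vertex x ∈ V that is not contained in any member of 𝒩. -/

import Mathlib

namespace SepPaper

/-- if `𝒩` is a nested set on a connected finite simple graph `G`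
(conditions (N1), (N2), (N3)) and the full vertex set is not a member of `𝒩`,
then some vertex lies in no member of `𝒩`. -/
theorem stmt_13 {V : Type*} [Fintype V] (G : SimpleGraph V) (hG : G.Connected)
    (𝒩 : Set (Set V))
    (hN1 : ∀ J ∈ 𝒩, (G.induce J).Connected)
    (hN2 : ∀ I ∈ 𝒩, ∀ J ∈ 𝒩, I ⊆ J ∨ J ⊆ I ∨ I ∩ J = ∅)
    (hN3 : ∀ S : Finset (Set V), ↑S ⊆ 𝒩 → 2 ≤ S.card →
      (↑S : Set (Set V)).Pairwise (fun I J => I ∩ J = ∅) →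
      ¬ (G.induce (⋃₀ (↑S : Set (Set V)))).Connected)
    (hV : Set.univ ∉ 𝒩) :
    ∃ x : V, ∀ J ∈ 𝒩, x ∉ J := by
  classical
  by_contra h
  push_neg at h
  -- the set of maximal members of 𝒩
  set Max : Set (Set V) := {M | M ∈ 𝒩 ∧ ∀ K ∈ 𝒩, M ⊆ K → M = K} with hMax
  -- every member of 𝒩 is contained in a maximal member
  have hlift : ∀ J ∈ 𝒩, ∃ M ∈ Max, J ⊆ M := by
    intro J hJ
    have hfin : ({K | K ∈ 𝒩 ∧ J ⊆ K}).Finite := Set.toFinite _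
    have hne : ({K | K ∈ 𝒩 ∧ J ⊆ K}).Nonempty := ⟨J, hJ, subset_rfl⟩
    obtain ⟨M, hM, hmax⟩ : ∃ M, Maximal (· ∈ {K | K ∈ 𝒩 ∧ J ⊆ K}) M := hfin.exists_maximal hne
    refine ⟨M, ⟨hM.1, ?_⟩, hM.2⟩
    intro K hK hMK
    exact Set.Subset.antisymm hMK (hmax ⟨hK, hM.2.trans hMK⟩ hMK)
  -- maximal members cover V
  have hcover : ⋃₀ Max = Set.univ := by
    apply Set.eq_univ_of_forall
    intro x
    obtain ⟨J, hJ, hxJ⟩ := h x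
    obtain ⟨M, hMmax, hJM⟩ := hlift J hJ
    exact ⟨M, hMmax, hJM hxJ⟩
  have hfinM : Max.Finite := Set.toFinite _
  set S : Finset (Set V) := hfinM.toFinset with hS
  have hSmem : ∀ M, M ∈ S ↔ M ∈ Max := fun M => hfinM.mem_toFinset
  have hScoe : (↑S : Set (Set V)) = Max := hfinM.coe_toFinset
  have hsub : (↑S : Set (Set V)) ⊆ 𝒩 := by
    rw [hScoe]; exact fun M hM => hM.1
  have hpair : (↑S : Set (Set V)).Pairwise (fun I J => I ∩ J = ∅) := by
    rw [hScoe]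
    intro I hI J hJ hne
    rcases hN2 I hI.1 J hJ.1 with h1 | h1 | h1
    · exact absurd (hI.2 J hJ.1 h1) hne
    · exact absurd (hJ.2 I hI.1 h1).symm hne
    · exact h1
  have hunion : ⋃₀ (↑S : Set (Set V)) = Set.univ := by rw [hScoe]; exact hcover
  -- V is nonempty
  have hV0 : Nonempty V := hG.nonempty
  obtain ⟨x⟩ := hV0
  obtain ⟨J, hJ, hxJ⟩ := h x
  obtain ⟨M, hMmax, _⟩ := hlift J hJ
  -- card ≥ 2
  have hcard : 2 ≤ S.card := by
    by_contra hc
    push_neg at hc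
    interval_cases hc' : S.card
    · have : Max = ∅ := by
        rw [← hScoe]
        exact_mod_cast Finset.card_eq_zero.mp hc'
      rw [this] at hMmax; exact hMmax
    · obtain ⟨M', hM'⟩ := Finset.card_eq_one.mp hc'
      have : Max = {M'} := by rw [← hScoe, hM']; simp
      have hMuniv : M' = Set.univ := by
        rw [this] at hcover; simpa using hcover
      have : M' ∈ Max := by rw [this]; rfl
      rw [hMuniv] at this
      exact hV this.1
  have := hN3 S hsub hcard hpair
  rw [hunion] at this
  exact this ((SimpleGraph.induceUnivIso G).connected_iff.mpr hG)

end SepPaper
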